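/- Let q be a prime power, f : F_q^k → S any function, and t_d ≤ t_f. Let C be an [n, k] linear code over F_q with minimum distance at least 2t_d+1 and encoding u ↦ c_u. Then for any vectors u_1, …, u_M ∈ F_q^k, N(D_{C,f}(t_f : u_1, …, u_M)) ≤ N(M, 2(t_f − t_d)), where N(M, D) is the minimum length of a q-ary code with M codewords and pairwise Hamming distance at least D. -/
import Mathlib


/-- The coded distance requirement matrix `D_{C,f}(t_f : u_1, …, u_M)`. -/
def CDRM {F S : Type*} [Fintype F] [DecidableEq F] [DecidableEq S] {k n M : ℕ}
    (cenc : (Fin k → F) → (Fin n → F)) (f : (Fin k → F) → S) (tf : ℕ)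
    (u : Fin M → Fin k → F) : Fin M → Fin M → ℕ := fun i j =>
  if f (u i) ≠ f (u j) then 2 * tf + 1 - hammingDist (cenc (u i)) (cenc (u j)) else 0

/-- `N(D)`: the least length `r` for which a `D`-code of length `r` over `F` exists. -/
noncomputable def Nmat (F : Type*) [Fintype F] [DecidableEq F] {M : ℕ}
    (D : Fin M → Fin M → ℕ) : ℕ :=
  sInf {r : ℕ | ∃ p : Fin M → Fin r → F, ∀ i j, D i j ≤ hammingDist (p i) (p j)}

/-- `N(M, d)`: the minimum length of a code over `F` with `M` codewords and pairwise Hamming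
distance at least `d`. -/
noncomputable def Ncode (F : Type*) [Fintype F] [DecidableEq F] (M d : ℕ) : ℕ :=
  sInf {n : ℕ | ∃ p : Fin M → Fin n → F, ∀ i j, i ≠ j → d ≤ hammingDist (p i) (p j)}

/-- A code of length `d * M` with `M` codewords and pairwise distance at least `d` exists. -/
lemma Ncode_set_nonempty (F : Type*) [Field F] [Fintype F] [DecidableEq F] (M d : ℕ) :
    (d * M) ∈ {n : ℕ | ∃ p : Fin M → Fin n → F,
      ∀ i j, i ≠ j → d ≤ hammingDist (p i) (p j)} := by
  classical
  let e : Fin d × Fin M ≃ Fin (d * M) := finProdFinEquiv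
  refine ⟨fun i x => if (e.symm x).2 = i then (1 : F) else 0, fun i j hij => ?_⟩
  have : d ≤ (Finset.univ.filter fun x : Fin (d * M) =>
      (if (e.symm x).2 = i then (1 : F) else 0) ≠ (if (e.symm x).2 = j then (1 : F) else 0)).card := by
    have := Finset.card_le_card_of_injOn (f := fun t : Fin d => e (t, i))
      (s := (Finset.univ : Finset (Fin d)))
      (t := Finset.univ.filter fun x : Fin (d * M) =>
        (if (e.symm x).2 = i then (1 : F) else 0) ≠ (if (e.symm x).2 = j then (1 : F) else 0))
      ?_ ?_
    · simpa using this
    · intro t _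
      simp only [Finset.mem_filter, Finset.mem_univ, true_and, Equiv.symm_apply_apply]
      simp [hij, Ne.symm hij]
    · intro a _ b _ hab
      have := e.injective hab
      exact (Prod.mk.injEq _ _ _ _).mp this |>.1
  simpa [hammingDist] using this

/-- For an `[n, k]` linear code `C` over `F_q` with minimum distance at least
`2t_d+1`, and any vectors `u_1, …, u_M ∈ F_q^k`,
`N(D_{C,f}(t_f : u_1, …, u_M)) ≤ N(M, 2(t_f − t_d))`. -/
theorem Nmat_CDRM_le_Ncode
    {F S : Type*} [Field F] [Fintype F] [DecidableEq F] [DecidableEq S]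
    {k n : ℕ} (f : (Fin k → F) → S) (td tf : ℕ) (htdtf : td ≤ tf)
    (C : (Fin k → F) →ₗ[F] (Fin n → F)) (hCinj : Function.Injective C)
    (hCdist : ∀ u v : Fin k → F, u ≠ v → 2 * td + 1 ≤ hammingDist (C u) (C v))
    {M : ℕ} (u : Fin M → Fin k → F) :
    Nmat F (CDRM (⇑C) f tf u) ≤ Ncode F M (2 * (tf - td)) := by
  set d := 2 * (tf - td) with hd
  have hne : {n : ℕ | ∃ p : Fin M → Fin n → F,
      ∀ i j, i ≠ j → d ≤ hammingDist (p i) (p j)}.Nonempty :=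
    ⟨d * M, Ncode_set_nonempty F M d⟩
  obtain ⟨p, hp⟩ := Nat.sInf_mem hne
  apply Nat.sInf_le
  refine ⟨p, fun i j => ?_⟩
  unfold CDRM
  split_ifs with hf
  · have huij : u i ≠ u j := fun h => hf (by rw [h])
    have hij : i ≠ j := fun h => huij (by rw [h])
    have h1 : 2 * td + 1 ≤ hammingDist (C (u i)) (C (u j)) := hCdist _ _ huij
    have h2 : 2 * tf + 1 - hammingDist (C (u i)) (C (u j)) ≤ d := by omega
    exact h2.trans (hp i j hij)
  · exact Nat.zero_le _
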